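/- arXiv:2602.00345 — 4 statements merged into one kernel-verified Lean document; each statement's English description precedes it below -/
import Mathlib

section
/- The functions u±(y) = 1 − α± y²/(y² + β±), with α± = 2 ± 2√((d−4)/(3(d−2))) and β± = (2/3)(d−4) ± (1/3)√(3(d−2)(d−4)), satisfy the ODE y²(1−y²)u'' + ((d−3)y − 2y³)u' + (d−2)u(1−u²) = 0 for all real y where y² + β± ≠ 0, for any real d ≥ 5 (for u₊) and d ≥ 11 (for u₋). -/
noncomputable def alphaP (d : ℝ) : ℝ := 2 + 2 * Real.sqrt ((d - 4) / (3 * (d - 2)))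
noncomputable def alphaM (d : ℝ) : ℝ := 2 - 2 * Real.sqrt ((d - 4) / (3 * (d - 2)))
noncomputable def betaP (d : ℝ) : ℝ := 2 / 3 * (d - 4) + 1 / 3 * Real.sqrt (3 * (d - 2) * (d - 4))
noncomputable def betaM (d : ℝ) : ℝ := 2 / 3 * (d - 4) - 1 / 3 * Real.sqrt (3 * (d - 2) * (d - 4))
noncomputable def uPlus (d y : ℝ) : ℝ := 1 - alphaP d * y ^ 2 / (y ^ 2 + betaP d)
noncomputable def uMinus (d y : ℝ) : ℝ := 1 - alphaM d * y ^ 2 / (y ^ 2 + betaM d)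


lemma deriv1 (a b : ℝ) (hb : 0 < b) (x : ℝ) :
    HasDerivAt (fun y : ℝ => 1 - a * y ^ 2 / (y ^ 2 + b))
      (-2 * a * b * x / (x ^ 2 + b) ^ 2) x := by
  have hden : x ^ 2 + b ≠ 0 := by positivity
  have h1 : HasDerivAt (fun y : ℝ => a * y ^ 2) (a * (2 * x)) x := by
    simpa using ((hasDerivAt_pow 2 x).const_mul a)
  have h2 : HasDerivAt (fun y : ℝ => y ^ 2 + b) (2 * x) x := by
    simpa using (hasDerivAt_pow 2 x).add_const b
  have h3 := (h1.div h2 hden)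
  have h4 := h3.const_sub 1
  convert h4 using 1
  · rfl
  · rfl
  · rfl
  field_simp
  ring

lemma deriv2 (a b : ℝ) (hb : 0 < b) (x : ℝ) :
    HasDerivAt (fun y : ℝ => -2 * a * b * y / (y ^ 2 + b) ^ 2)
      (-2 * a * b * (b - 3 * x ^ 2) / (x ^ 2 + b) ^ 3) x := by
  have hden : (x ^ 2 + b) ^ 2 ≠ 0 := by positivity
  have h1 : HasDerivAt (fun y : ℝ => -2 * a * b * y) (-2 * a * b) x := by
    simpa using (hasDerivAt_id x).const_mul (-2 * a * b)
  have h2 : HasDerivAt (fun y : ℝ => (y ^ 2 + b) ^ 2) (2 * (x ^ 2 + b) * (2 * x)) x := by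
    have := ((hasDerivAt_pow 2 x).add_const b).pow 2
    simpa [mul_comm, mul_assoc, mul_left_comm, Pi.pow_def] using this
  have h3 := h1.div h2 hden
  convert h3 using 1
  have hden0 : x ^ 2 + b ≠ 0 := by positivity
  · rfl
  · rfl
  · rfl
  field_simp
  ring

lemma key (a b d : ℝ) (hb : 0 < b)
    (h1 : 2 * b = (d - 2) * (a - 1) * (a - 2))
    (h2 : 6 * b = 3 * a * (d - 2) - 2 * (d + 2)) (y : ℝ) :
    y ^ 2 * (1 - y ^ 2) * deriv (deriv (fun y : ℝ => 1 - a * y ^ 2 / (y ^ 2 + b))) y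
      + ((d - 3) * y - 2 * y ^ 3) * deriv (fun y : ℝ => 1 - a * y ^ 2 / (y ^ 2 + b)) y
      + (d - 2) * (1 - a * y ^ 2 / (y ^ 2 + b)) * (1 - (1 - a * y ^ 2 / (y ^ 2 + b)) ^ 2) = 0 := by
  have hD : deriv (fun y : ℝ => 1 - a * y ^ 2 / (y ^ 2 + b))
      = fun x : ℝ => -2 * a * b * x / (x ^ 2 + b) ^ 2 := by
    funext x; exact (deriv1 a b hb x).deriv
  rw [hD, (deriv2 a b hb y).deriv]
  have hden : y ^ 2 + b ≠ 0 := by positivity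
  field_simp
  linear_combination (a * b * y ^ 4) * h2 - (a * y ^ 6) * h1
theorem stmt0 (d : ℝ) :
    (d ≥ 5 → ∀ y : ℝ, y ^ 2 + betaP d ≠ 0 →
      y ^ 2 * (1 - y ^ 2) * deriv (deriv (uPlus d)) y
        + ((d - 3) * y - 2 * y ^ 3) * deriv (uPlus d) y
        + (d - 2) * uPlus d y * (1 - (uPlus d y) ^ 2) = 0) ∧
    (d ≥ 11 → ∀ y : ℝ, y ^ 2 + betaM d ≠ 0 →
      y ^ 2 * (1 - y ^ 2) * deriv (deriv (uMinus d)) y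
        + ((d - 3) * y - 2 * y ^ 3) * deriv (uMinus d) y
        + (d - 2) * uMinus d y * (1 - (uMinus d y) ^ 2) = 0) := by
  constructor
  · intro hd y _
    have hd2 : (0:ℝ) < d - 2 := by linarith
    set s := Real.sqrt ((d - 4) / (3 * (d - 2))) with hs
    have hsnn : 0 ≤ s := Real.sqrt_nonneg _
    have harg : 0 ≤ (d - 4) / (3 * (d - 2)) := div_nonneg (by linarith) (by linarith)
    have hs2 : s ^ 2 = (d - 4) / (3 * (d - 2)) := Real.sq_sqrt harg
    have hs2' : 3 * (d - 2) * s ^ 2 = d - 4 := by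
      rw [hs2]; field_simp
    have ht : Real.sqrt (3 * (d - 2) * (d - 4)) = 3 * (d - 2) * s := by
      have : 3 * (d - 2) * (d - 4) = (3 * (d - 2) * s) ^ 2 := by
        ring_nf; nlinarith [hs2']
      rw [this, Real.sqrt_sq (by positivity)]
    have hb : 0 < betaP d := by
      unfold betaP; rw [ht]; nlinarith
    have h1 : 2 * betaP d = (d - 2) * (alphaP d - 1) * (alphaP d - 2) := by
      unfold betaP alphaP; rw [ht, ← hs]
      linear_combination (-4/3) * hs2'
    have h2 : 6 * betaP d = 3 * alphaP d * (d - 2) - 2 * (d + 2) := by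
      unfold betaP alphaP; rw [ht, ← hs]; ring
    have heq : uPlus d = fun y : ℝ => 1 - alphaP d * y ^ 2 / (y ^ 2 + betaP d) := rfl
    rw [heq]
    exact key (alphaP d) (betaP d) d hb h1 h2 y
  · intro hd y _
    have hd2 : (0:ℝ) < d - 2 := by linarith
    set s := Real.sqrt ((d - 4) / (3 * (d - 2))) with hs
    have hsnn : 0 ≤ s := Real.sqrt_nonneg _
    have harg : 0 ≤ (d - 4) / (3 * (d - 2)) := div_nonneg (by linarith) (by linarith)
    have hs2 : s ^ 2 = (d - 4) / (3 * (d - 2)) := Real.sq_sqrt harg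
    have hs2' : 3 * (d - 2) * s ^ 2 = d - 4 := by
      rw [hs2]; field_simp
    have ht : Real.sqrt (3 * (d - 2) * (d - 4)) = 3 * (d - 2) * s := by
      have : 3 * (d - 2) * (d - 4) = (3 * (d - 2) * s) ^ 2 := by
        ring_nf; nlinarith [hs2']
      rw [this, Real.sqrt_sq (by positivity)]
    have hb : 0 < betaM d := by
      unfold betaM; rw [ht]
      have hlt : 3 * (d - 2) * s < 2 * (d - 4) := by
        nlinarith [hs2', hsnn]
      linarith
    have h1 : 2 * betaM d = (d - 2) * (alphaM d - 1) * (alphaM d - 2) := by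
      unfold betaM alphaM; rw [ht, ← hs]
      linear_combination (-4/3) * hs2'
    have h2 : 6 * betaM d = 3 * alphaM d * (d - 2) - 2 * (d + 2) := by
      unfold betaM alphaM; rw [ht, ← hs]; ring
    have heq : uMinus d = fun y : ℝ => 1 - alphaM d * y ^ 2 / (y ^ 2 + betaM d) := rfl
    rw [heq]
    exact key (alphaM d) (betaM d) d hb h1 h2 y
end

section
/- Let u : [0,1] → ℝ be a C² solution of y²(1−y²)u'' + ((d−3)y − 2y³)u' + (d−2)u(1−u²) = 0 on (0,1) with d > 4, and define H(y) = (1/2)y²(1−y²)u'(y)² − ((d−2)/4)(1−u(y)²)². Then H'(y) = −(d−4)y u'(y)² for all y ∈ (0,1). -/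
theorem stmt2 (d : ℝ) (hd : d > 4) (u u' u'' : ℝ → ℝ)
    (hu : ∀ y ∈ Set.Ioo (0 : ℝ) 1, HasDerivAt u (u' y) y)
    (hu' : ∀ y ∈ Set.Ioo (0 : ℝ) 1, HasDerivAt u' (u'' y) y)
    (hode : ∀ y ∈ Set.Ioo (0 : ℝ) 1,
      y ^ 2 * (1 - y ^ 2) * u'' y + ((d - 3) * y - 2 * y ^ 3) * u' y
        + (d - 2) * u y * (1 - (u y) ^ 2) = 0) :
    ∀ y ∈ Set.Ioo (0 : ℝ) 1,
      HasDerivAt (fun y => (1 / 2) * y ^ 2 * (1 - y ^ 2) * (u' y) ^ 2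
          - ((d - 2) / 4) * (1 - (u y) ^ 2) ^ 2)
        (-(d - 4) * y * (u' y) ^ 2) y := by
  intro y hy
  have h1 := hu y hy
  have h2 := hu' y hy
  have hA : HasDerivAt (fun y => (1 / 2) * y ^ 2 * (1 - y ^ 2) * (u' y) ^ 2)
      (((1/2) * (2 * y) * (1 - y ^ 2) + (1/2) * y ^ 2 * (-(2 * y))) * (u' y) ^ 2
        + (1/2) * y ^ 2 * (1 - y ^ 2) * (2 * u' y * u'' y)) y := by
    have hp : HasDerivAt (fun y : ℝ => (1/2) * y ^ 2 * (1 - y ^ 2))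
        ((1/2) * (2 * y) * (1 - y ^ 2) + (1/2) * y ^ 2 * (-(2 * y))) y := by
      have := (((hasDerivAt_pow 2 y).const_mul (1/2 : ℝ)).mul
        ((hasDerivAt_const y (1:ℝ)).sub (hasDerivAt_pow 2 y)))
      exact this.congr_deriv (by simp only [Pi.sub_apply]; ring)
    have hq : HasDerivAt (fun y => (u' y) ^ 2) (2 * u' y * u'' y) y := by
      have := h2.pow 2
      exact this.congr_deriv (by ring)
    exact hp.mul hq
  have hB : HasDerivAt (fun y => ((d - 2) / 4) * (1 - (u y) ^ 2) ^ 2)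
      (((d - 2) / 4) * (2 * (1 - (u y) ^ 2) * (-(2 * u y * u' y)))) y := by
    have hq : HasDerivAt (fun y => (1 - (u y) ^ 2) ^ 2)
        (2 * (1 - (u y) ^ 2) * (-(2 * u y * u' y))) y := by
      have h3 : HasDerivAt (fun y => 1 - (u y) ^ 2) (-(2 * u y * u' y)) y := by
        have := (hasDerivAt_const y (1:ℝ)).sub (h1.pow 2)
        exact this.congr_deriv (by ring)
      have := h3.pow 2
      exact this.congr_deriv (by ring)
    exact hq.const_mul _
  have := hA.sub hB
  exact this.congr_deriv (by linear_combination (u' y) * hode y hy)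
end

section
/- Let d ≥ 10 and let u be a C³ solution of the self-similar Yang–Mills ODE on (0,1) with u(y) = 1 − a y² + O(y⁴) near y = 0 for some a > 0 (so that h(y) = y³u'(y) satisfies h(y) ~ −2ay⁴ near 0). Then u'(y) < 0 for all y ∈ (0,1). -/
open Filter Topology Asymptotics

set_option maxHeartbeats 1600000 in
theorem stmt4 (d : ℝ) (hd : d ≥ 10) (a : ℝ) (ha : a > 0) (u u' u'' u''' : ℝ → ℝ)
    (hu : ∀ y ∈ Set.Ioo (0 : ℝ) 1, HasDerivAt u (u' y) y)
    (hu' : ∀ y ∈ Set.Ioo (0 : ℝ) 1, HasDerivAt u' (u'' y) y)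
    (hu'' : ∀ y ∈ Set.Ioo (0 : ℝ) 1, HasDerivAt u'' (u''' y) y)
    (hode : ∀ y ∈ Set.Ioo (0 : ℝ) 1,
      y ^ 2 * (1 - y ^ 2) * u'' y + ((d - 3) * y - 2 * y ^ 3) * u' y
        + (d - 2) * u y * (1 - (u y) ^ 2) = 0)
    (hasymp : (fun y => u y - (1 - a * y ^ 2)) =O[𝓝[>] 0] fun y => y ^ 4)
    (hh : Tendsto (fun y => y ^ 3 * u' y / y ^ 4) (𝓝[>] 0) (𝓝 (-2 * a))) :
    ∀ y ∈ Set.Ioo (0 : ℝ) 1, u' y < 0 := by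
  -- h(y) = y^3 u'(y) and its derivatives
  set H : ℝ → ℝ := fun y => y ^ 3 * u' y with hHdef
  set H1 : ℝ → ℝ := fun y => 3 * y ^ 2 * u' y + y ^ 3 * u'' y with hH1def
  set H2 : ℝ → ℝ := fun y => 6 * y * u' y + 6 * y ^ 2 * u'' y + y ^ 3 * u''' y with hH2def
  have hder1 : ∀ y ∈ Set.Ioo (0 : ℝ) 1, HasDerivAt H (H1 y) y := by
    intro y hy
    have := (hasDerivAt_pow 3 y).mul (hu' y hy)
    refine this.congr_deriv ?_; push_cast; ring
  have hder2 : ∀ y ∈ Set.Ioo (0 : ℝ) 1, HasDerivAt H1 (H2 y) y := by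
    intro y hy
    have A := ((hasDerivAt_pow 2 y).const_mul (3:ℝ)).mul (hu' y hy)
    have B := (hasDerivAt_pow 3 y).mul (hu'' y hy)
    refine (A.add B).congr_deriv ?_; push_cast; ring
  -- differentiated ODE
  have hE : ∀ y ∈ Set.Ioo (0 : ℝ) 1,
      y ^ 2 * (1 - y ^ 2) * u''' y + ((d - 1) * y - 6 * y ^ 3) * u'' y
        + (2 * d - 5 - 6 * y ^ 2 - 3 * (d - 2) * (u y) ^ 2) * u' y = 0 := by
    intro y hy
    have c1 : HasDerivAt (fun z : ℝ => z ^ 2 * (1 - z ^ 2)) (2 * y - 4 * y ^ 3) y := by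
      have := (hasDerivAt_pow 2 y).fun_mul ((hasDerivAt_const y (1:ℝ)).fun_sub (hasDerivAt_pow 2 y))
      refine this.congr_deriv ?_; push_cast; ring
    have c2 : HasDerivAt (fun z : ℝ => (d - 3) * z - 2 * z ^ 3) (d - 3 - 6 * y ^ 2) y := by
      have := ((hasDerivAt_id y).const_mul (d - 3)).sub ((hasDerivAt_pow 3 y).const_mul (2:ℝ))
      refine this.congr_deriv ?_; push_cast; ring
    have c3a : HasDerivAt (fun z : ℝ => (d - 2) * u z) ((d - 2) * u' y) y := (hu y hy).const_mul _
    have c3b : HasDerivAt (fun z : ℝ => 1 - (u z) ^ 2) (0 - 2 * u y ^ 1 * u' y) y :=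
      (hasDerivAt_const y (1:ℝ)).sub ((hu y hy).pow 2)
    have hF : HasDerivAt (fun z : ℝ => z ^ 2 * (1 - z ^ 2) * u'' z + ((d - 3) * z - 2 * z ^ 3) * u' z
        + (d - 2) * u z * (1 - (u z) ^ 2))
        (((2 * y - 4 * y ^ 3) * u'' y + y ^ 2 * (1 - y ^ 2) * u''' y)
          + ((d - 3 - 6 * y ^ 2) * u' y + ((d - 3) * y - 2 * y ^ 3) * u'' y)
          + (((d - 2) * u' y) * (1 - (u y) ^ 2) + ((d - 2) * u y) * (0 - 2 * u y ^ 1 * u' y))) y :=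
      ((c1.mul (hu'' y hy)).add (c2.mul (hu' y hy))).add (c3a.mul c3b)
    have hzero : HasDerivAt (fun _ : ℝ => (0:ℝ))
        (((2 * y - 4 * y ^ 3) * u'' y + y ^ 2 * (1 - y ^ 2) * u''' y)
          + ((d - 3 - 6 * y ^ 2) * u' y + ((d - 3) * y - 2 * y ^ 3) * u'' y)
          + (((d - 2) * u' y) * (1 - (u y) ^ 2) + ((d - 2) * u y) * (0 - 2 * u y ^ 1 * u' y))) y := by
      apply hF.congr_of_eventuallyEq
      filter_upwards [isOpen_Ioo.mem_nhds hy] with z hz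
      exact (hode z hz).symm
    have h0 := (hasDerivAt_const y (0:ℝ)).unique hzero
    linear_combination -h0
  -- linear ODE for H
  have hLh : ∀ y ∈ Set.Ioo (0 : ℝ) 1,
      y ^ 2 * (1 - y ^ 2) * H2 y + (d - 7) * y * H1 y
        - (3 * (d - 2) * (u y) ^ 2 + (d - 10)) * H y = 0 := by
    intro y hy
    simp only [hHdef, hH1def, hH2def]
    linear_combination y ^ 3 * (hE y hy)
  -- H < 0 near 0
  obtain ⟨δ, hδpos, hδneg⟩ : ∃ δ > (0:ℝ), ∀ y ∈ Set.Ioo (0:ℝ) δ, H y < 0 := by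
    have hev := Filter.Tendsto.eventually_lt_const (show (-2 * a) < (0:ℝ) by linarith) hh
    rw [eventually_nhdsWithin_iff] at hev
    obtain ⟨ε, hε, hball⟩ := Metric.eventually_nhds_iff.mp hev
    refine ⟨ε, hε, ?_⟩
    intro y hy
    have hdy : dist y 0 < ε := by
      rw [Real.dist_eq, sub_zero, abs_of_pos hy.1]; exact hy.2
    have hlt := hball hdy hy.1
    have hy4 : (0:ℝ) < y ^ 4 := pow_pos hy.1 4
    show y ^ 3 * u' y < 0
    by_contra hge
    push_neg at hge
    have : 0 ≤ y ^ 3 * u' y / y ^ 4 := div_nonneg hge hy4.le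
    linarith
  -- H → 0 at 0⁺
  have htends0 : Tendsto H (𝓝[>] (0:ℝ)) (𝓝 0) := by
    have h4 : Tendsto (fun y : ℝ => y ^ 4) (𝓝[>] (0:ℝ)) (𝓝 0) := by
      have := ((continuous_pow 4).tendsto (0:ℝ)).mono_left (nhdsWithin_le_nhds : 𝓝[>] (0:ℝ) ≤ 𝓝 0)
      simpa using this
    have T := hh.mul h4
    rw [mul_zero] at T
    refine T.congr' ?_
    filter_upwards [self_mem_nhdsWithin] with y hy
    have : y ≠ 0 := ne_of_gt hy
    field_simp
    rfl
  -- main argument by contradiction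
  intro y₀ hy₀
  by_contra hcon
  push_neg at hcon
  have hy0h : 0 ≤ H y₀ := mul_nonneg (pow_pos hy₀.1 3).le hcon
  set m : ℝ := min δ y₀ with hmdef
  have hmpos : 0 < m := lt_min hδpos hy₀.1
  have hmle : m ≤ y₀ := min_le_right _ _
  set Z : Set ℝ := Set.Icc m y₀ ∩ H ⁻¹' Set.Ici 0 with hZdef
  have hIccsub : Set.Icc m y₀ ⊆ Set.Ioo (0:ℝ) 1 := fun t ht =>
    ⟨lt_of_lt_of_le hmpos ht.1, lt_of_le_of_lt ht.2 hy₀.2⟩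
  have hcont : ContinuousOn H (Set.Icc m y₀) := fun t ht =>
    ((hder1 t (hIccsub ht)).continuousAt).continuousWithinAt
  have hZclosed : IsClosed Z := hcont.preimage_isClosed_of_isClosed isClosed_Icc isClosed_Ici
  have hZne : Z.Nonempty := ⟨y₀, ⟨hmle, le_refl _⟩, hy0h⟩
  have hZbdd : BddBelow Z := ⟨m, fun t ht => ht.1.1⟩
  set y₁ : ℝ := sInf Z with hy₁def
  have hy₁Z : y₁ ∈ Z := hZclosed.csInf_mem hZne hZbdd
  have hy₁m : m ≤ y₁ := hy₁Z.1.1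
  have hy₁y₀ : y₁ ≤ y₀ := hy₁Z.1.2
  have hy₁H : 0 ≤ H y₁ := hy₁Z.2
  have hy₁pos : 0 < y₁ := lt_of_lt_of_le hmpos hy₁m
  have hy₁lt1 : y₁ < 1 := lt_of_le_of_lt hy₁y₀ hy₀.2
  have hneg : ∀ t ∈ Set.Ioo (0:ℝ) y₁, H t < 0 := by
    intro t ht
    rcases lt_or_ge t m with h1 | h2
    · exact hδneg t ⟨ht.1, lt_of_lt_of_le h1 (min_le_left _ _)⟩
    · by_contra hge
      push_neg at hge
      have htZ : t ∈ Z := ⟨⟨h2, le_trans ht.2.le hy₁y₀⟩, hge⟩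
      have := csInf_le hZbdd htZ
      linarith [ht.2]
  -- MVT gives a point with H1 > 0
  have hhalf : y₁ / 2 < y₁ := by linarith
  have hIccsub2 : Set.Icc (y₁/2) y₁ ⊆ Set.Ioo (0:ℝ) 1 := fun t ht =>
    ⟨lt_of_lt_of_le (by linarith) ht.1, lt_of_le_of_lt ht.2 hy₁lt1⟩
  obtain ⟨ξ, hξmem, hslope⟩ := exists_hasDerivAt_eq_slope H H1 hhalf
    (fun t ht => ((hder1 t (hIccsub2 ht)).continuousAt).continuousWithinAt)
    (fun x hx => hder1 x (hIccsub2 ⟨hx.1.le, hx.2.le⟩))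
  have hξIoo : ξ ∈ Set.Ioo (0:ℝ) y₁ := ⟨lt_trans (by linarith) hξmem.1, hξmem.2⟩
  have hHhalf : H (y₁/2) < 0 := hneg _ ⟨by linarith, hhalf⟩
  have hξpos : 0 < H1 ξ := by
    rw [hslope]
    apply div_pos (by linarith) (by linarith)
  -- integrating factor
  set p : ℝ := d - 7 with hpdef
  set P : ℝ → ℝ := fun y => y ^ p * (1 - y ^ 2) ^ (-(p/2)) with hPdef
  have hPpos : ∀ y ∈ Set.Ioo (0:ℝ) 1, 0 < P y := by
    intro y hy
    have h1y : (0:ℝ) < 1 - y ^ 2 := by nlinarith [hy.1, hy.2]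
    exact mul_pos (Real.rpow_pos_of_pos hy.1 _) (Real.rpow_pos_of_pos h1y _)
  have hPderiv : ∀ y ∈ Set.Ioo (0:ℝ) 1, HasDerivAt P (P y * p / (y * (1 - y ^ 2))) y := by
    intro y hy
    have hy0 : y ≠ 0 := ne_of_gt hy.1
    have h1y : (0:ℝ) < 1 - y ^ 2 := by nlinarith [hy.1, hy.2]
    have dA : HasDerivAt (fun y : ℝ => y ^ p) (p * y ^ (p - 1)) y :=
      Real.hasDerivAt_rpow_const (Or.inl hy0)
    have dInner : HasDerivAt (fun y : ℝ => 1 - y ^ 2) (-(2 * y)) y := by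
      have := (hasDerivAt_const y (1:ℝ)).sub (hasDerivAt_pow 2 y)
      refine this.congr_deriv ?_; push_cast; ring
    have dB : HasDerivAt (fun y : ℝ => (1 - y ^ 2) ^ (-(p/2)))
        ((-(p/2)) * (1 - y ^ 2) ^ (-(p/2) - 1) * (-(2 * y))) y :=
      by have := (Real.hasDerivAt_rpow_const (x := 1 - y ^ 2) (p := -(p/2)) (Or.inl (ne_of_gt h1y))).comp y dInner; exact this
    have dP := dA.mul dB
    refine dP.congr_deriv ?_
    have e1 : y ^ (p - 1) = y ^ p / y := by
      rw [show p - 1 = p - 1 from rfl, Real.rpow_sub hy.1, Real.rpow_one]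
    have e2 : (1 - y ^ 2) ^ (-(p/2) - 1) = (1 - y ^ 2) ^ (-(p/2)) / (1 - y ^ 2) := by
      rw [Real.rpow_sub h1y, Real.rpow_one]
    simp only [hPdef]
    rw [e1, e2]
    field_simp
    ring
  set g : ℝ → ℝ := fun y => P y * H1 y with hgdef
  have hgderiv : ∀ y ∈ Set.Ioo (0:ℝ) 1,
      HasDerivAt g (P y * ((3 * (d - 2) * (u y) ^ 2 + (d - 10)) * H y) / (y ^ 2 * (1 - y ^ 2))) y := by
    intro y hy
    have hy0 : y ≠ 0 := ne_of_gt hy.1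
    have h1y : (0:ℝ) < 1 - y ^ 2 := by nlinarith [hy.1, hy.2]
    have h1y0 : 1 - y ^ 2 ≠ 0 := ne_of_gt h1y
    have := (hPderiv y hy).mul (hder2 y hy)
    refine this.congr_deriv ?_
    have key := hLh y hy
    field_simp
    linear_combination (P y) * key
  -- g is antitone on (0, y₁)
  have hsub3 : Set.Ioo (0:ℝ) y₁ ⊆ Set.Ioo (0:ℝ) 1 := fun t ht => ⟨ht.1, lt_trans ht.2 hy₁lt1⟩
  have hanti : AntitoneOn g (Set.Ioo (0:ℝ) y₁) := by
    apply antitoneOn_of_deriv_nonpos (convex_Ioo _ _)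
    · exact fun t ht => ((hgderiv t (hsub3 ht)).continuousAt).continuousWithinAt
    · rw [isOpen_Ioo.interior_eq]
      exact fun t ht => ((hgderiv t (hsub3 ht)).differentiableAt).differentiableWithinAt
    · rw [isOpen_Ioo.interior_eq]
      intro t ht
      rw [(hgderiv t (hsub3 ht)).deriv]
      have hPt := hPpos t (hsub3 ht)
      have hHt := hneg t ht
      have hc : 0 ≤ 3 * (d - 2) * (u t) ^ 2 + (d - 10) := by nlinarith [sq_nonneg (u t)]
      have h1t : (0:ℝ) < 1 - t ^ 2 := by nlinarith [(hsub3 ht).1, (hsub3 ht).2]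
      apply div_nonpos_of_nonpos_of_nonneg
      · exact mul_nonpos_of_nonneg_of_nonpos hPt.le
          (mul_nonpos_of_nonneg_of_nonpos hc hHt.le)
      · positivity
  have hgξ : 0 < g ξ := mul_pos (hPpos ξ (hsub3 hξIoo)) hξpos
  have hH1pos : ∀ t ∈ Set.Ioo (0:ℝ) y₁, t ≤ ξ → 0 < H1 t := by
    intro t ht hle
    have h1 : g ξ ≤ g t := hanti ht hξIoo hle
    have h2 : 0 < g t := lt_of_lt_of_le hgξ h1
    have hPt := hPpos t (hsub3 ht)
    have h2' : 0 < P t * H1 t := by simpa [hgdef] using h2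
    nlinarith [h2', hPt]
  -- contradiction via monotonicity of H near 0
  set τ : ℝ := ξ / 2 with hτdef
  have hτIoo : τ ∈ Set.Ioo (0:ℝ) y₁ := ⟨by linarith [hξIoo.1], by linarith [hξIoo.1, hξIoo.2]⟩
  have hmono : ∀ s ∈ Set.Ioo (0:ℝ) τ, H s < H τ := by
    intro s hs
    have hsτ : s < τ := hs.2
    have hIcc : Set.Icc s τ ⊆ Set.Ioo (0:ℝ) 1 := fun t ht =>
      ⟨lt_of_lt_of_le hs.1 ht.1, lt_of_le_of_lt ht.2 (lt_trans hτIoo.2 hy₁lt1)⟩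
    have : StrictMonoOn H (Set.Icc s τ) := by
      apply strictMonoOn_of_deriv_pos (convex_Icc _ _)
      · exact fun t ht => ((hder1 t (hIcc ht)).continuousAt).continuousWithinAt
      · rw [interior_Icc]
        intro t ht
        have htIoo : t ∈ Set.Ioo (0:ℝ) y₁ := ⟨lt_trans hs.1 ht.1, lt_trans ht.2 hτIoo.2⟩
        rw [(hder1 t (hsub3 htIoo)).deriv]
        exact hH1pos t htIoo (by linarith [ht.2, hξIoo.1])
    exact this ⟨le_refl s, hsτ.le⟩ ⟨hsτ.le, le_refl τ⟩ hsτ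
  have hev2 : ∀ᶠ s in 𝓝[>] (0:ℝ), H s ≤ H τ := by
    filter_upwards [Ioo_mem_nhdsGT_of_mem ⟨le_refl (0:ℝ), hτIoo.1⟩] with s hs
    exact (hmono s hs).le
  have hle0 : (0:ℝ) ≤ H τ := le_of_tendsto htends0 hev2
  have := hneg τ hτIoo
  linarith
end

section
/- If h : (0,1) → ℝ is C² and satisfies y²(1−y²)h'' + (d−7)y h' − q(y) h = 0 on (0,1) with q(y) > 0 for all y, and h is negative and strictly decreasing on some interval (0,ε), then h is negative and strictly decreasing on all of (0,1). -/
open Set Filter Topology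

theorem stmt5 (d : ℝ) (h h' h'' q : ℝ → ℝ)
    (hh : ∀ y ∈ Set.Ioo (0 : ℝ) 1, HasDerivAt h (h' y) y)
    (hh' : ∀ y ∈ Set.Ioo (0 : ℝ) 1, HasDerivAt h' (h'' y) y)
    (hq : ∀ y ∈ Set.Ioo (0 : ℝ) 1, q y > 0)
    (hode : ∀ y ∈ Set.Ioo (0 : ℝ) 1,
      y ^ 2 * (1 - y ^ 2) * h'' y + (d - 7) * y * h' y - q y * h y = 0)
    (hinit : ∃ ε > 0, ε ≤ 1 ∧ (∀ y ∈ Set.Ioo (0 : ℝ) ε, h y < 0) ∧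
      StrictAntiOn h (Set.Ioo 0 ε)) :
    (∀ y ∈ Set.Ioo (0 : ℝ) 1, h y < 0) ∧ StrictAntiOn h (Set.Ioo (0 : ℝ) 1) := by
  obtain ⟨ε, hε0, hε1, hneg, hanti⟩ := hinit
  -- L2: at a zero of h' with h < 0, h' is positive just to the left
  have L2 : ∀ y₀ ∈ Set.Ioo (0:ℝ) 1, h y₀ < 0 → h' y₀ = 0 →
      ∀ᶠ z in 𝓝[<] y₀, 0 < h' z := by
    intro y₀ hy₀ hhy hpy
    have hb : (0:ℝ) < y₀ ^ 2 * (1 - y₀ ^ 2) := by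
      have h1 : 0 < y₀ ^ 2 := pow_pos hy₀.1 2
      have h2 : 0 < 1 - y₀ ^ 2 := by nlinarith [hy₀.1, hy₀.2]
      exact mul_pos h1 h2
    have hq0 := hq y₀ hy₀
    have hode0 := hode y₀ hy₀
    have h2 : h'' y₀ < 0 := by
      by_contra hcc
      push_neg at hcc
      have h3 : 0 ≤ y₀ ^ 2 * (1 - y₀ ^ 2) * h'' y₀ := mul_nonneg hb.le hcc
      have h4 : q y₀ * h y₀ < 0 := mul_neg_of_pos_of_neg hq0 hhy
      rw [hpy] at hode0
      linarith
    have hs := hasDerivAt_iff_tendsto_slope.mp (hh' y₀ hy₀)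
    have hev : ∀ᶠ z in 𝓝[≠] y₀, slope h' y₀ z < 0 := hs.eventually_lt_const h2
    have hle : 𝓝[<] y₀ ≤ 𝓝[≠] y₀ :=
      nhdsWithin_mono _ (fun z hz => ne_of_lt hz)
    have hev' : ∀ᶠ z in 𝓝[<] y₀, slope h' y₀ z < 0 := hev.filter_mono hle
    filter_upwards [hev', self_mem_nhdsWithin] with z hz hzlt
    have hzy : z < y₀ := hzlt
    by_contra hc
    push_neg at hc
    rw [slope_def_field, hpy] at hz
    have : (0:ℝ) ≤ (h' z - 0) / (z - y₀) := by
      rw [div_nonneg_iff]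
      right
      exact ⟨by linarith, by linarith⟩
    linarith
  -- L1: on (0, ε), h' ≤ 0 (slope argument from strict antitonicity)
  have L1 : ∀ y ∈ Set.Ioo (0:ℝ) ε, h' y ≤ 0 := by
    intro y hy
    have hy1 : y ∈ Set.Ioo (0:ℝ) 1 := ⟨hy.1, lt_of_lt_of_le hy.2 hε1⟩
    have hs := hasDerivAt_iff_tendsto_slope.mp (hh y hy1)
    have hs' : Tendsto (slope h y) (𝓝[>] y) (𝓝 (h' y)) :=
      hs.mono_left (nhdsWithin_mono _ (fun z hz => ne_of_gt hz))
    refine le_of_tendsto hs' ?_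
    filter_upwards [Ioo_mem_nhdsGT_of_mem ⟨le_refl y, hy.2⟩] with z hz
    rw [slope_def_field]
    apply div_nonpos_of_nonpos_of_nonneg
    · have := hanti hy ⟨hy.1.trans hz.1, hz.2⟩ hz.1
      linarith
    · linarith [hz.1]
  -- Step A: h' < 0 on (0, ε)
  have StepA : ∀ y ∈ Set.Ioo (0:ℝ) ε, h' y < 0 := by
    intro y hy
    rcases lt_or_eq_of_le (L1 y hy) with hlt | heq
    · exact hlt
    · exfalso
      have hy1 : y ∈ Set.Ioo (0:ℝ) 1 := ⟨hy.1, lt_of_lt_of_le hy.2 hε1⟩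
      have hev := L2 y hy1 (hneg y hy) heq
      have hm : Set.Ioo (0:ℝ) y ∈ 𝓝[<] y :=
        Ioo_mem_nhdsLT_of_mem ⟨hy.1, le_refl y⟩
      obtain ⟨z, hz1, hz2⟩ := (hev.and (eventually_of_mem hm (fun _ hx => hx))).exists
      have : h' z ≤ 0 := L1 z ⟨hz2.1, hz2.2.trans hy.2⟩
      linarith
  -- Step B: h' < 0 on all of (0, 1)
  have StepB : ∀ y ∈ Set.Ioo (0:ℝ) 1, h' y < 0 := by
    by_contra hc
    push_neg at hc
    obtain ⟨y, hy, hy'⟩ := hc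
    set A := {z : ℝ | z ∈ Set.Ico ε 1 ∧ 0 ≤ h' z} with hA
    have hyA : y ∈ A := by
      refine ⟨⟨?_, hy.2⟩, hy'⟩
      by_contra hlt
      push_neg at hlt
      exact absurd hy' (not_le.mpr (StepA y ⟨hy.1, hlt⟩))
    have hne : A.Nonempty := ⟨y, hyA⟩
    have hbdd : BddBelow A := ⟨ε, fun z hz => hz.1.1⟩
    set y₀ := sInf A with hy₀def
    have hy₀ε : ε ≤ y₀ := le_csInf hne fun z hz => hz.1.1
    have hy₀le : y₀ ≤ y := csInf_le hbdd hyA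
    have hy₀mem : y₀ ∈ Set.Ioo (0:ℝ) 1 :=
      ⟨lt_of_lt_of_le hε0 hy₀ε, lt_of_le_of_lt hy₀le hy.2⟩
    -- h' < 0 strictly below y₀
    have hlt : ∀ z ∈ Set.Ioo (0:ℝ) y₀, h' z < 0 := by
      intro z hz
      by_cases hzε : z < ε
      · exact StepA z ⟨hz.1, hzε⟩
      · push_neg at hzε
        by_contra hc2
        push_neg at hc2
        have : z ∈ A := ⟨⟨hzε, hz.2.trans hy₀mem.2⟩, hc2⟩
        exact absurd (csInf_le hbdd this) (not_le.mpr hz.2)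
    have hcont : ContinuousAt h' y₀ := (hh' y₀ hy₀mem).continuousAt
    -- h' y₀ ≤ 0 from the left
    have h'le : h' y₀ ≤ 0 := by
      have htend : Tendsto h' (𝓝[<] y₀) (𝓝 (h' y₀)) :=
        hcont.continuousWithinAt.tendsto
      refine le_of_tendsto htend ?_
      filter_upwards [Ioo_mem_nhdsLT_of_mem ⟨hy₀mem.1, le_refl y₀⟩] with z hz
      exact (hlt z hz).le
    -- h' y₀ ≥ 0 by continuity and definition of sInf
    have h'ge : 0 ≤ h' y₀ := by
      by_contra hc2
      push_neg at hc2
      have hnb : {z : ℝ | h' z < 0} ∈ 𝓝 y₀ := hcont (Iio_mem_nhds hc2)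
      obtain ⟨δ, hδ0, hball⟩ := Metric.mem_nhds_iff.mp hnb
      obtain ⟨a, haA, halt⟩ := Real.lt_sInf_add_pos hne hδ0
      have ha1 : y₀ ≤ a := csInf_le hbdd haA
      have : a ∈ Metric.ball y₀ δ := by
        rw [Metric.mem_ball, Real.dist_eq, abs_sub_lt_iff]
        constructor <;> linarith
      exact absurd haA.2 (not_le.mpr (hball this))
    have h'zero : h' y₀ = 0 := le_antisymm h'le h'ge
    -- h y₀ < 0 via monotonicity on (0, y₀]
    have hcontOn : ContinuousOn h (Set.Ioc (0:ℝ) y₀) := fun z hz =>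
      ((hh z ⟨hz.1, lt_of_le_of_lt hz.2 hy₀mem.2⟩).continuousAt).continuousWithinAt
    have hmono : StrictAntiOn h (Set.Ioc (0:ℝ) y₀) := by
      apply strictAntiOn_of_deriv_neg (convex_Ioc 0 y₀) hcontOn
      intro z hz
      rw [interior_Ioc] at hz
      rw [(hh z ⟨hz.1, hz.2.trans hy₀mem.2⟩).deriv]
      exact hlt z hz
    have hmid : (ε/2) ∈ Set.Ioc (0:ℝ) y₀ := ⟨by linarith, by linarith⟩
    have hy₀neg : h y₀ < 0 := by
      have h1 := hmono hmid ⟨hy₀mem.1, le_refl y₀⟩ (by linarith)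
      have h2 := hneg (ε/2) ⟨by linarith, by linarith⟩
      linarith
    -- contradiction with L2
    have hev := L2 y₀ hy₀mem hy₀neg h'zero
    have hm : Set.Ioo (0:ℝ) y₀ ∈ 𝓝[<] y₀ :=
      Ioo_mem_nhdsLT_of_mem ⟨hy₀mem.1, le_refl y₀⟩
    obtain ⟨z, hz1, hz2⟩ := (hev.and (eventually_of_mem hm (fun _ hx => hx))).exists
    exact absurd (hlt z hz2) (not_lt.mpr hz1.le)
  -- conclude
  have hanti1 : StrictAntiOn h (Set.Ioo (0:ℝ) 1) := by
    apply strictAntiOn_of_deriv_neg (convex_Ioo 0 1)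
    · exact fun z hz => ((hh z hz).continuousAt).continuousWithinAt
    · intro z hz
      rw [interior_Ioo] at hz
      rw [(hh z hz).deriv]
      exact StepB z hz
  refine ⟨?_, hanti1⟩
  intro y hy
  by_cases hyε : y < ε
  · exact hneg y ⟨hy.1, hyε⟩
  · push_neg at hyε
    have h1 := hanti1 ⟨by linarith, by linarith⟩ hy (by linarith : ε/2 < y)
    have h2 := hneg (ε/2) ⟨by linarith, by linarith⟩
    linarith
end
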